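/- Let 0<s<1 and s≤β<2s, and suppose f:[0,π]→ℝ is a C² function satisfying f'(θ) = (1/sin θ)[(f(θ)-(β-s)cos θ)² + (β-s)² sin² θ - s²] on (0,π), with f(0)=β, f(π)=2s-β>0, f'(0)=f'(π)=0. Then there exists C>0 such that f(θ) ≥ C for all θ∈[0,π]. -/

import Mathlib

open Real Set Filter

set_option maxHeartbeats 1000000

/-- Positivity of `f`: if `f` is C² on `[0,π]`, solves the Riccati equation
`f' = (1/sin θ)[(f-(β-s)cos θ)² + (β-s)² sin²θ - s²]` on `(0,π)` with
`f(0) = β`, `f(π) = 2s - β > 0` and `f'(0) = f'(π) = 0`, then `f` is bounded below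
by a positive constant on `[0,π]`. -/
theorem riccati_solution_positive (s β : ℝ) (f : ℝ → ℝ)
    (hs : 0 < s) (hs1 : s < 1) (hsβ : s ≤ β) (hβs : β < 2 * s)
    (hf : ContDiffOn ℝ 2 f (Icc 0 π))
    (hode : ∀ θ ∈ Ioo (0:ℝ) π,
      deriv f θ = (1 / Real.sin θ) *
        ((f θ - (β - s) * Real.cos θ) ^ 2 + (β - s) ^ 2 * Real.sin θ ^ 2 - s ^ 2))
    (hf0 : f 0 = β) (hfπ : f π = 2 * s - β) (hpos : 0 < 2 * s - β)
    (hf'0 : deriv f 0 = 0) (hf'π : deriv f π = 0) :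
    ∃ C > 0, ∀ θ ∈ Icc (0:ℝ) π, C ≤ f θ := by
  have hπ : (0:ℝ) < π := Real.pi_pos
  have hcont : ContinuousOn f (Icc 0 π) := hf.continuousOn
  obtain ⟨θ₀, hθ₀mem, hmin⟩ :=
    isCompact_Icc.exists_isMinOn ⟨0, left_mem_Icc.2 hπ.le⟩ hcont
  refine ⟨f θ₀, ?_, fun θ hθ => hmin hθ⟩
  by_contra hle
  push_neg at hle
  have hθ0 : θ₀ ≠ 0 := by
    intro h; rw [h, hf0] at hle; linarith
  have hθπ : θ₀ ≠ π := by
    intro h; rw [h, hfπ] at hle; linarith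
  have hθIoo : θ₀ ∈ Ioo 0 π :=
    ⟨lt_of_le_of_ne hθ₀mem.1 (Ne.symm hθ0), lt_of_le_of_ne hθ₀mem.2 hθπ⟩
  have hnhds : ∀ x ∈ Ioo (0:ℝ) π, Icc (0:ℝ) π ∈ nhds x := fun x hx => Icc_mem_nhds hx.1 hx.2
  have hdiff : ∀ x ∈ Ioo (0:ℝ) π, HasDerivAt f (deriv f x) x := by
    intro x hx
    have h1 : DifferentiableWithinAt ℝ f (Icc 0 π) x :=
      (hf.differentiableOn (by norm_num)) x (Ioo_subset_Icc_self hx)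
    exact (h1.differentiableAt (hnhds x hx)).hasDerivAt
  have hσpos : 0 < Real.sin θ₀ := Real.sin_pos_of_pos_of_lt_pi hθIoo.1 hθIoo.2
  have hderiv0 : deriv f θ₀ = 0 :=
    (hmin.isLocalMin (hnhds θ₀ hθIoo)).deriv_eq_zero
  set a := β - s with ha_def
  have ha0 : 0 ≤ a := by simp [ha_def]; linarith
  have ha1 : a < s := by simp [ha_def]; linarith
  set σ := Real.sin θ₀ with hσ_def
  set c := Real.cos θ₀ with hc_def
  have hpyth : σ ^ 2 + c ^ 2 = 1 := Real.sin_sq_add_cos_sq θ₀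
  have hψ0 : 0 < s ^ 2 - a ^ 2 * σ ^ 2 := by nlinarith [sq_nonneg σ, sq_nonneg c]
  set r := Real.sqrt (s ^ 2 - a ^ 2 * σ ^ 2) with hr_def
  have hr2 : r ^ 2 = s ^ 2 - a ^ 2 * σ ^ 2 := Real.sq_sqrt hψ0.le
  have hrpos : 0 < r := Real.sqrt_pos.2 hψ0
  -- at the minimum, the ODE RHS vanishes
  have hE : (f θ₀ - a * c) ^ 2 = s ^ 2 - a ^ 2 * σ ^ 2 := by
    have h := hode θ₀ hθIoo
    rw [hderiv0] at h
    have h2 : (f θ₀ - a * c) ^ 2 + a ^ 2 * σ ^ 2 - s ^ 2 = 0 := by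
      rcases mul_eq_zero.1 h.symm with h3 | h3
      · exact absurd h3 (by positivity)
      · exact h3
    linarith
  have hfac : (f θ₀ - a * c - r) * (f θ₀ - a * c + r) = 0 := by nlinarith
  have hmeq : f θ₀ = a * c - r := by
    rcases mul_eq_zero.1 hfac with h | h
    · -- f θ₀ = a*c + r > 0 : contradiction with hle
      exfalso
      have hm : f θ₀ = a * c + r := by linarith
      have hacr : 0 < a * c + r := by nlinarith [sq_nonneg (a * c + r)]
      rw [hm] at hle; linarith
    · linarith
  have hmlt : f θ₀ < 0 := by
    rcases lt_or_eq_of_le hle with h | h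
    · exact h
    · exfalso; nlinarith
  -- two cases: a = 0 and a > 0
  rcases eq_or_lt_of_le ha0 with haz | hapos
  · -- degenerate case β = s : f ≡ -s to the right of θ₀ by Gronwall
    have hβeq : β = s := by simp [ha_def] at haz; linarith
    have hrs : r = s := by
      rw [hr_def, ← haz]; simp [Real.sqrt_sq hs.le]
    have hfm : f θ₀ = -s := by rw [hmeq, ← haz, hrs]; ring
    have hclaim : ∀ b ∈ Ioo θ₀ π, f b = -s := by
      intro b hb
      have hsub : Icc θ₀ b ⊆ Icc 0 π := Icc_subset_Icc hθIoo.1.le hb.2.le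
      have hsubIoo : Icc θ₀ b ⊆ Ioo 0 π := fun x hx =>
        ⟨lt_of_lt_of_le hθIoo.1 hx.1, lt_of_le_of_lt hx.2 hb.2⟩
      obtain ⟨M, hM⟩ := isCompact_Icc.exists_bound_of_continuousOn
        ((hcont.mono hsub).sub continuousOn_const (g := fun _ => s))
      obtain ⟨x₀, hx₀mem, hx₀min⟩ := isCompact_Icc.exists_isMinOn
        ⟨θ₀, left_mem_Icc.2 hb.1.le⟩ Real.continuous_sin.continuousOn
      have hσ₀ : 0 < Real.sin x₀ :=
        Real.sin_pos_of_pos_of_lt_pi (hsubIoo hx₀mem).1 (hsubIoo hx₀mem).2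
      have hM0 : 0 ≤ M := le_trans (norm_nonneg _) (hM θ₀ (left_mem_Icc.2 hb.1.le))
      have hbound := norm_le_gronwallBound_of_norm_deriv_right_le
        (f := fun θ => f θ + s) (f' := deriv f) (δ := 0) (K := M / Real.sin x₀) (ε := 0)
        (a := θ₀) (b := b)
        ((hcont.mono hsub).add continuousOn_const)
        (fun x hx => by
          have hxI : x ∈ Ioo 0 π := hsubIoo ⟨hx.1, hx.2.le⟩
          have := ((hdiff x hxI).add_const s).hasDerivWithinAt (s := Ici x)
          exact this)
        (by simp [hfm])
        (fun x hx => by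
          have hxI : x ∈ Ioo 0 π := hsubIoo ⟨hx.1, hx.2.le⟩
          have hsinx : 0 < Real.sin x := Real.sin_pos_of_pos_of_lt_pi hxI.1 hxI.2
          have hsinge : Real.sin x₀ ≤ Real.sin x := hx₀min ⟨hx.1, hx.2.le⟩
          have hMx : |f x - s| ≤ M := hM x ⟨hx.1, hx.2.le⟩
          rw [hode x hxI, ← haz]
          have he : (1 / Real.sin x) *
              ((f x - 0 * Real.cos x) ^ 2 + 0 ^ 2 * Real.sin x ^ 2 - s ^ 2)
              = (1 / Real.sin x) * ((f x + s) * (f x - s)) := by ring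
          rw [he, Real.norm_eq_abs, Real.norm_eq_abs, abs_mul, abs_mul,
            abs_of_pos (by positivity : (0:ℝ) < 1 / Real.sin x)]
          have h1 : 1 / Real.sin x ≤ 1 / Real.sin x₀ :=
            one_div_le_one_div_of_le hσ₀ hsinge
          calc 1 / Real.sin x * (|f x + s| * |f x - s|)
              ≤ 1 / Real.sin x₀ * (|f x + s| * M) := by
                apply mul_le_mul h1 _ (by positivity) (by positivity)
                exact mul_le_mul_of_nonneg_left hMx (abs_nonneg _)
            _ = M / Real.sin x₀ * |f x + s| + 0 := by ring)
        b (right_mem_Icc.2 hb.1.le)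
      rw [gronwallBound_ε0_δ0, Real.norm_eq_abs] at hbound
      have h0 : f b + s = 0 := by simpa using abs_nonpos_iff.1 hbound
      linarith
    -- take the limit b → π
    have hneBot : (nhdsWithin π (Ioo θ₀ π)).NeBot := by
      rw [← mem_closure_iff_nhdsWithin_neBot, closure_Ioo (ne_of_lt hθIoo.2)]
      exact right_mem_Icc.2 hθIoo.2.le
    have ht1 : Tendsto f (nhdsWithin π (Ioo θ₀ π)) (nhds (f π)) :=
      (hcont π (right_mem_Icc.2 hπ.le)).mono_left
        (nhdsWithin_mono _ (fun x hx => ⟨le_trans hθIoo.1.le hx.1.le, hx.2.le⟩))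
    have ht2 : Tendsto f (nhdsWithin π (Ioo θ₀ π)) (nhds (-s)) := by
      refine Tendsto.congr' ?_ tendsto_const_nhds
      exact eventually_mem_nhdsWithin.mono (fun x hx => (hclaim x hx).symm)
    have := tendsto_nhds_unique ht1 ht2
    rw [hfπ, hβeq] at this
    linarith
  · -- main case a > 0 : f is strictly decreasing just right of θ₀
    set ψ : ℝ → ℝ := fun θ => s ^ 2 - a ^ 2 * Real.sin θ ^ 2 with hψ_def
    have hψpos : ∀ θ, 0 < ψ θ := by
      intro θ
      have := Real.sin_sq_add_cos_sq θ
      simp only [hψ_def]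
      nlinarith [sq_nonneg (Real.sin θ), sq_nonneg (Real.cos θ)]
    set φ : ℝ → ℝ := fun θ => a * Real.cos θ - Real.sqrt (ψ θ) with hφ_def
    set φp : ℝ → ℝ := fun θ => a * Real.cos θ + Real.sqrt (ψ θ) with hφp_def
    have hψθ₀ : ψ θ₀ = s ^ 2 - a ^ 2 * σ ^ 2 := rfl
    have hrψ : Real.sqrt (ψ θ₀) = r := by rw [hψθ₀, hr_def]
    have hφθ₀ : φ θ₀ = f θ₀ := by
      simp only [hφ_def, hrψ]; rw [hmeq]
    -- derivative of φ at θ₀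
    have hψderiv : HasDerivAt ψ (-(a ^ 2 * (2 * Real.sin θ₀ * Real.cos θ₀))) θ₀ := by
      have h1 : HasDerivAt (fun θ => Real.sin θ ^ 2) (2 * Real.sin θ₀ * Real.cos θ₀) θ₀ := by
        have := (Real.hasDerivAt_sin θ₀).fun_pow 2
        simpa [mul_comm] using this
      have h2 := (h1.const_mul (a ^ 2)).const_sub (s ^ 2)
      convert h2 using 1
    have hsqrtderiv : HasDerivAt (fun θ => Real.sqrt (ψ θ))
        (-(a ^ 2 * (2 * Real.sin θ₀ * Real.cos θ₀)) / (2 * r)) θ₀ := by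
      have := hψderiv.sqrt (ne_of_gt (hψpos θ₀))
      rwa [hrψ] at this
    have hφderiv : HasDerivAt φ
        (a * (-Real.sin θ₀) - (-(a ^ 2 * (2 * Real.sin θ₀ * Real.cos θ₀)) / (2 * r))) θ₀ :=
      ((Real.hasDerivAt_cos θ₀).const_mul a).sub hsqrtderiv
    set D := a * (-Real.sin θ₀) - (-(a ^ 2 * (2 * Real.sin θ₀ * Real.cos θ₀)) / (2 * r))
      with hD_def
    have hDr : D * r = a * σ * f θ₀ := by
      rw [hD_def, hmeq]
      field_simp
      ring
    have hD : D < 0 := by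
      have h1 : D * r < 0 := by
        rw [hDr]
        exact mul_neg_of_pos_of_neg (mul_pos hapos hσpos) hmlt
      nlinarith
    -- eventually φ θ < φ θ₀ on the right
    have hslope : Tendsto (slope φ θ₀) (nhdsWithin θ₀ {θ₀}ᶜ) (nhds D) :=
      hasDerivAt_iff_tendsto_slope.1 hφderiv
    have hev1 : ∀ᶠ θ in nhdsWithin θ₀ (Ioi θ₀), φ θ < φ θ₀ := by
      have h2 : ∀ᶠ θ in nhdsWithin θ₀ {θ₀}ᶜ, slope φ θ₀ θ < 0 :=
        hslope.eventually_lt_const hD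
      have h3 : ∀ᶠ θ in nhdsWithin θ₀ (Ioi θ₀), slope φ θ₀ θ < 0 :=
        h2.filter_mono (nhdsWithin_mono _ (fun x hx => ne_of_gt hx))
      refine h3.and eventually_mem_nhdsWithin |>.mono ?_
      rintro θ ⟨hθs, hθmem⟩
      rw [slope_def_field] at hθs
      have hθgt : θ₀ < θ := hθmem
      have := div_neg_iff.1 hθs
      rcases this with ⟨h4, h5⟩ | ⟨h4, h5⟩
      · linarith
      · linarith
    -- eventually f θ < φp θ
    have hfcontθ₀ : ContinuousAt f θ₀ :=
      (hcont θ₀ (Ioo_subset_Icc_self hθIoo)).continuousAt (hnhds θ₀ hθIoo)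
    have hφpcont : Continuous φp := by
      apply (continuous_const.mul Real.continuous_cos).add
      exact Real.continuous_sqrt.comp
        (continuous_const.sub (continuous_const.mul (Real.continuous_sin.pow 2)))
    have hev2' : ∀ᶠ θ in nhds θ₀, f θ - φp θ < 0 := by
      have hc : ContinuousAt (fun θ => f θ - φp θ) θ₀ := hfcontθ₀.sub hφpcont.continuousAt
      have hval : f θ₀ - φp θ₀ < 0 := by
        simp only [hφp_def, hrψ]
        rw [hmeq]; linarith
      exact hc.eventually_lt_const hval
    have hev2 : ∀ᶠ θ in nhdsWithin θ₀ (Ioi θ₀), f θ - φp θ < 0 :=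
      hev2'.filter_mono nhdsWithin_le_nhds
    have hev3 : ∀ᶠ θ in nhdsWithin θ₀ (Ioi θ₀), θ ∈ Ioo θ₀ π :=
      eventually_of_mem (Ioo_mem_nhdsGT_of_mem ⟨le_refl θ₀, hθIoo.2⟩) (fun x hx => hx)
    obtain ⟨u, hu, husub⟩ := mem_nhdsGT_iff_exists_Ioo_subset.1
      ((hev1.and (hev2.and hev3)).filter_mono le_rfl)
    -- pick b' with θ₀ < b' < π and Ioo θ₀ b' ⊆ good set
    set b' := min u ((θ₀ + π) / 2) with hb'_def
    have hb'1 : θ₀ < b' := lt_min hu (by linarith [hθIoo.2, hθIoo.1])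
    have hb'2 : b' < π := lt_of_le_of_lt (min_le_right _ _) (by linarith [hθIoo.2])
    have hb'π : b' ≤ π := hb'2.le
    have hfc' : ContinuousOn f (Icc θ₀ b') := hcont.mono (Icc_subset_Icc hθIoo.1.le hb'π)
    have hanti : StrictAntiOn f (Icc θ₀ b') := by
      apply strictAntiOn_of_deriv_neg (convex_Icc _ _) hfc'
      intro x hx
      rw [interior_Icc] at hx
      have hxu : x ∈ Ioo θ₀ u := ⟨hx.1, lt_of_lt_of_le hx.2 (min_le_left _ _)⟩
      obtain ⟨h1, h2, h3⟩ := husub hxu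
      have hxI : x ∈ Ioo 0 π := ⟨lt_trans hθIoo.1 hx.1, h3.2⟩
      have hsinx : 0 < Real.sin x := Real.sin_pos_of_pos_of_lt_pi hxI.1 hxI.2
      have hfx : f θ₀ ≤ f x := hmin (Ioo_subset_Icc_self hxI)
      have hlow : φ x < f x := by rw [hφθ₀] at h1; linarith
      have hsq : Real.sqrt (ψ x) ^ 2 = ψ x := Real.sq_sqrt (hψpos x).le
      have hkey : (f x - a * Real.cos x) ^ 2 + a ^ 2 * Real.sin x ^ 2 - s ^ 2
          = (f x - φ x) * (f x - φp x) := by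
        simp only [hφ_def, hφp_def, hψ_def] at hsq ⊢
        linear_combination hsq
      rw [hode x hxI, hkey]
      have hfactneg : (f x - φ x) * (f x - φp x) < 0 :=
        mul_neg_of_pos_of_neg (by linarith) (by linarith)
      exact mul_neg_of_pos_of_neg (by positivity) hfactneg
    have hcontra : f b' < f θ₀ :=
      hanti (left_mem_Icc.2 hb'1.le) (right_mem_Icc.2 hb'1.le) hb'1
    have hge : f θ₀ ≤ f b' := hmin ⟨le_trans hθIoo.1.le hb'1.le, hb'π⟩
    linarith
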